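/- Every minimal vanishing sum of roots of unity of weight d with 1 ≤ d < 6 has d prime (d ∈ {2,3,5}) and equals {αζ : ζ^d = 1} for some fixed root of unity α, i.e., it is a common scalar multiple of the full set of d-th roots of unity. -/

import Mathlib

open Polynomial IntermediateField Module

noncomputable section SMVS


noncomputable section SMVS

lemma ru_ne_zero {z : ℂ} {m : ℕ} (hm : 0 < m) (h : z ^ m = 1) : z ≠ 0 := by
  intro h0; rw [h0, zero_pow hm.ne'] at h; exact zero_ne_one h

lemma ru_unit {z : ℂ} {m : ℕ} (hm : 0 < m) (h : z ^ m = 1) :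
    z * (starRingEnd ℂ) z = 1 := by
  have h1 : ‖z‖ ^ m = 1 := by
    have := congrArg norm h
    simpa [norm_pow] using this
  have h2 : ‖z‖ = 1 := by
    rcases lt_trichotomy (‖z‖) 1 with h | h | h
    · have : ‖z‖ ^ m < 1 := pow_lt_one₀ (norm_nonneg z) h hm.ne'
      exact absurd h1 (by linarith)
    · exact h
    · have : 1 < ‖z‖ ^ m := one_lt_pow₀ h hm.ne'
      exact absurd h1 (by linarith)
  have := Complex.mul_conj z
  rw [this, Complex.normSq_eq_norm_sq, h2]
  norm_num

lemma ru_mul {z w : ℂ} {a b : ℕ} (ha : 0 < a) (hb : 0 < b) (hz : z ^ a = 1)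
    (hw : w ^ b = 1) : ∃ m : ℕ, 0 < m ∧ (z * w) ^ m = 1 := by
  refine ⟨a * b, Nat.mul_pos ha hb, ?_⟩
  rw [mul_pow, pow_mul, hz, one_pow, one_mul, mul_comm a b, pow_mul, hw, one_pow]

lemma three_units {a b c : ℂ} (ha : a * (starRingEnd ℂ) a = 1)
    (hb : b * (starRingEnd ℂ) b = 1) (hc : c * (starRingEnd ℂ) c = 1)
    (h : a + b + c = 0) : a ^ 2 + a * b + b ^ 2 = 0 := by
  have hconj : (starRingEnd ℂ) a + (starRingEnd ℂ) b + (starRingEnd ℂ) c = 0 := by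
    have := congrArg (starRingEnd ℂ) h
    simpa [map_add] using this
  have h1 : b * c + a * c + a * b = 0 := by
    linear_combination (a * b * c) * hconj - (b * c) * ha - (a * c) * hb - (a * b) * hc
  linear_combination (a + b) * h - h1

lemma four_units {a b c d : ℂ} (ha : a * (starRingEnd ℂ) a = 1)
    (hb : b * (starRingEnd ℂ) b = 1) (hc : c * (starRingEnd ℂ) c = 1)
    (hd : d * (starRingEnd ℂ) d = 1) (h : a + b + c + d = 0) :
    b = -a ∨ c = -a ∨ d = -a := by
  have hconj : (starRingEnd ℂ) a + (starRingEnd ℂ) b + (starRingEnd ℂ) c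
      + (starRingEnd ℂ) d = 0 := by
    have := congrArg (starRingEnd ℂ) h
    simpa [map_add] using this
  have h2 : b * c * d + a * c * d + a * b * d + a * b * c = 0 := by
    linear_combination (a * b * c * d) * hconj - (b * c * d) * ha - (a * c * d) * hb
      - (a * b * d) * hc - (a * b * c) * hd
  have h3 : (a + b) * ((a + c) * (a + d)) = 0 := by
    linear_combination a ^ 2 * h + h2
  rcases mul_eq_zero.mp h3 with h4 | h4
  · left; linear_combination h4
  · rcases mul_eq_zero.mp h4 with h5 | h5
    · right; left; linear_combination h5
    · right; right; linear_combination h5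



lemma prim_of_prime {p : ℕ} (hp : p.Prime) {ξ : ℂ} (h1 : ξ ^ p = 1) (h2 : ξ ≠ 1) :
    IsPrimitiveRoot ξ p := by
  constructor
  · exact h1
  · intro l hl
    have hd : orderOf ξ ∣ p := orderOf_dvd_of_pow_eq_one h1
    rcases (Nat.Prime.eq_one_or_self_of_dvd hp _ hd) with h | h
    · exact absurd (orderOf_eq_one_iff.mp h) h2
    · rw [← h]; exact orderOf_dvd_of_pow_eq_one hl

def msumHom : Multiset ℂ →+ ℂ where
  toFun := Multiset.sum
  map_zero' := Multiset.sum_zero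
  map_add' := fun a b => Multiset.sum_add a b

def mcardHom : Multiset ℂ →+ ℕ where
  toFun := Multiset.card
  map_zero' := Multiset.card_zero
  map_add' := fun a b => Multiset.card_add a b

lemma multiset_partition (T : Multiset ℂ) (g : ℂ → ℕ) (p : ℕ)
    (h : ∀ z ∈ T, g z < p) :
    ∑ j ∈ Finset.range p, T.filter (fun z => g z = j) = T := by
  classical
  induction T using Multiset.induction_on with
  | empty => simp
  | cons a s ih =>
    have ha : g a < p := h a (Multiset.mem_cons_self a s)
    have hs : ∀ z ∈ s, g z < p := fun z hz => h z (Multiset.mem_cons_of_mem hz)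
    have : ∀ j, (a ::ₘ s).filter (fun z => g z = j)
        = (if g a = j then {a} else 0) + s.filter (fun z => g z = j) := by
      intro j
      rw [Multiset.filter_cons]
    simp only [this]
    rw [Finset.sum_add_distrib, ih hs]
    congr 1
    rw [Finset.sum_ite_eq (Finset.range p) (g a) (fun _ => ({a} : Multiset ℂ))]
    simp [Finset.mem_range.mpr ha, Multiset.cons_eq_cons]

lemma sum_of_partition (T : Multiset ℂ) (g : ℂ → ℕ) (p : ℕ)
    (h : ∀ z ∈ T, g z < p) :
    ∑ j ∈ Finset.range p, (T.filter (fun z => g z = j)).sum = T.sum := by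
  have := congrArg msumHom (multiset_partition T g p h)
  rw [map_sum] at this
  exact this

lemma card_of_partition (T : Multiset ℂ) (g : ℂ → ℕ) (p : ℕ)
    (h : ∀ z ∈ T, g z < p) :
    ∑ j ∈ Finset.range p, Multiset.card (T.filter (fun z => g z = j)) = Multiset.card T := by
  have := congrArg mcardHom (multiset_partition T g p h)
  rw [map_sum] at this
  exact this

lemma sum_map_mul (c : ℂ) (S : Multiset ℂ) : (S.map (c * ·)).sum = c * S.sum := by
  induction S using Multiset.induction_on with
  | empty => simp
  | cons a s ih => simp [ih, mul_add]

lemma nthRoots_eq_of_prim {n : ℕ} {ξ : ℂ} (h : IsPrimitiveRoot ξ n) :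
    Polynomial.nthRoots n (1 : ℂ) = (Multiset.range n).map (ξ ^ ·) := by
  have := h.nthRoots_eq (α := (1 : ℂ)) (one_pow n)
  simpa using this

lemma card_eq_succ' {T : Multiset ℂ} {n : ℕ} (h : Multiset.card T = n + 1) :
    ∃ a s, T = a ::ₘ s ∧ Multiset.card s = n := by
  have hne : T ≠ 0 := by
    intro h0; rw [h0] at h; simp at h
  obtain ⟨a, ha⟩ := Multiset.exists_mem_of_ne_zero hne
  refine ⟨a, T.erase a, (Multiset.cons_erase ha).symm, ?_⟩
  have := Multiset.card_erase_of_mem ha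
  rw [this, h]; rfl

lemma card_eq_five {T : Multiset ℂ} (h : Multiset.card T = 5) :
    ∃ a b c d e, T = a ::ₘ b ::ₘ c ::ₘ d ::ₘ e ::ₘ 0 := by
  obtain ⟨a, s, rfl, hs⟩ := card_eq_succ' h
  obtain ⟨b, s2, rfl, hs2⟩ := card_eq_succ' hs
  obtain ⟨c, s3, rfl, hs3⟩ := card_eq_succ' hs2
  obtain ⟨d, s4, rfl, hs4⟩ := card_eq_succ' hs3
  obtain ⟨e, s5, rfl, hs5⟩ := card_eq_succ' hs4
  rw [Multiset.card_eq_zero.mp hs5]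
  exact ⟨a, b, c, d, e, rfl⟩



lemma finrank_adjoin_prim {k : ℕ} (hk : 0 < k) {ζ : ℂ} (h : IsPrimitiveRoot ζ k) :
    Module.finrank ℚ ℚ⟮ζ⟯ = Nat.totient k := by
  have hint : IsIntegral ℚ ζ := by
    refine ⟨X ^ k - C 1, monic_X_pow_sub_C _ hk.ne', ?_⟩
    simp [h.pow_eq_one]
  rw [IntermediateField.adjoin.finrank hint]
  rw [← Polynomial.cyclotomic_eq_minpoly_rat h hk]
  exact natDegree_cyclotomic k ℚ

lemma adjoin_deg {ζ ξ b : ℂ} (hζi : IsIntegral ℚ ζ)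
    (hξ : ∃ t : ℕ, ξ = ζ ^ t) (hb : ∃ s : ℕ, b = ζ ^ s)
    (hgen : ζ ∈ IntermediateField.adjoin ℚ ({b, ξ} : Set ℂ)) :
    (minpoly ℚ⟮b⟯ ξ).natDegree * Module.finrank ℚ ℚ⟮b⟯
      = Module.finrank ℚ ℚ⟮ζ⟯ := by
  obtain ⟨t, rfl⟩ := hξ
  obtain ⟨s, rfl⟩ := hb
  have hξi : IsIntegral ℚ (ζ ^ t) := hζi.pow t
  have hbi : IsIntegral ℚ (ζ ^ s) := hζi.pow s
  haveI : FiniteDimensional ℚ ℚ⟮ζ ^ s⟯ := IntermediateField.adjoin.finiteDimensional hbi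
  set K' : IntermediateField ℚ ℂ := ℚ⟮ζ ^ s⟯
  have hξi' : IsIntegral K' (ζ ^ t) := hξi.tower_top
  haveI : FiniteDimensional K' K'⟮ζ ^ t⟯ := IntermediateField.adjoin.finiteDimensional hξi'
  rw [← IntermediateField.adjoin.finrank hξi']
  have hrs : (K'⟮ζ ^ t⟯).restrictScalars ℚ = ℚ⟮ζ⟯ := by
    erw [IntermediateField.adjoin_adjoin_left]
    apply le_antisymm
    · rw [IntermediateField.adjoin_le_iff]
      rintro x hx
      rcases hx with rfl | hx
      · exact IntermediateField.pow_mem _ (IntermediateField.mem_adjoin_simple_self ℚ ζ) s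
      · rcases hx with rfl
        exact IntermediateField.pow_mem _ (IntermediateField.mem_adjoin_simple_self ℚ ζ) t
    · rw [IntermediateField.adjoin_le_iff]
      intro x hx
      rcases Set.mem_singleton_iff.mp hx with rfl
      rw [Set.singleton_union]
      exact hgen
  have h1 : Module.finrank ℚ K' * Module.finrank K' K'⟮ζ ^ t⟯
      = Module.finrank ℚ ℚ⟮ζ⟯ := by
    rw [← hrs]
    exact Module.finrank_mul_finrank ℚ K' (K'⟮ζ ^ t⟯)
  rw [mul_comm]
  exact h1



lemma coeffs_eq_zero (K' : IntermediateField ℚ ℂ) (ξ : ℂ) (N : ℕ)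
    (hdeg : N ≤ (minpoly K' ξ).natDegree)
    (a : ℕ → K')
    (hrel : ∑ j ∈ Finset.range N, (a j : ℂ) * ξ ^ j = 0) :
    ∀ j < N, a j = 0 := by
  classical
  set G : Polynomial K' := ∑ j ∈ Finset.range N, C (a j) * X ^ j with hG
  have hev : aeval ξ G = 0 := by
    rw [hG, map_sum]
    simp only [map_mul, map_pow, aeval_C, aeval_X]
    have hc : ∀ x : K', (algebraMap K' ℂ) x = ↑x := fun x => rfl
    simp only [hc]
    exact hrel
  have hdvd : minpoly K' ξ ∣ G := minpoly.dvd K' ξ hev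
  have hG0 : G = 0 := by
    rcases Nat.eq_zero_or_pos N with h0 | h0
    · subst h0
      simp only [Finset.range_zero, Finset.sum_empty] at hG
      exact hG
    have hGdeg : G.natDegree ≤ N - 1 := by
      apply Polynomial.natDegree_sum_le_of_forall_le
      intro j hj
      exact le_trans (natDegree_C_mul_X_pow_le (a j) j)
        (Nat.le_sub_one_of_lt (Finset.mem_range.mp hj))
    by_contra hne
    have := Polynomial.natDegree_le_of_dvd hdvd hne
    omega
  intro j hj
  have := congrArg (fun q => Polynomial.coeff q j) hG0
  simp only [hG] at this ⊢
  rw [Polynomial.finset_sum_coeff] at this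
  simp only [Polynomial.coeff_C_mul, Polynomial.coeff_X_pow, Polynomial.coeff_zero] at this
  rw [Finset.sum_eq_single j] at this
  · simpa using this
  · intro b _ hbj
    simp [Ne.symm hbj]
  · intro hjn
    exact absurd (Finset.mem_range.mpr hj) hjn



lemma fiber_rel (T : Multiset ℂ) (g : ℂ → ℕ) (p : ℕ)
    (hg : ∀ z ∈ T, g z < p) (ξb : ℂ) (hξb : ξb ≠ 0) (hsum : T.sum = 0) :
    ∑ j ∈ Finset.range p, ((ξb ^ j)⁻¹ * (T.filter (fun z => g z = j)).sum) * ξb ^ j = 0 := by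
  have he : ∀ j : ℕ, ((ξb ^ j)⁻¹ * (T.filter (fun z => g z = j)).sum) * ξb ^ j
      = (T.filter (fun z => g z = j)).sum := by
    intro j
    field_simp
  calc ∑ j ∈ Finset.range p, ((ξb ^ j)⁻¹ * (T.filter (fun z => g z = j)).sum) * ξb ^ j
      = ∑ j ∈ Finset.range p, (T.filter (fun z => g z = j)).sum := by
        exact Finset.sum_congr rfl (fun j _ => he j)
    _ = T.sum := sum_of_partition T g p hg
    _ = 0 := hsum

lemma single_fiber (T : Multiset ℂ) (g : ℂ → ℕ) (p : ℕ)
    (hg : ∀ z ∈ T, g z < p)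
    (hzero : ∀ j < p, (T.filter (fun z => g z = j)).sum = 0)
    (hmin : ∀ S ≤ T, S.sum = 0 → S = 0 ∨ S = T)
    (hT : T ≠ 0) : ∃ j0 < p, ∀ z ∈ T, g z = j0 := by
  obtain ⟨z0, hz0⟩ := Multiset.exists_mem_of_ne_zero hT
  refine ⟨g z0, hg z0 hz0, ?_⟩
  have hle : T.filter (fun z => g z = g z0) ≤ T := Multiset.filter_le _ T
  have hne : T.filter (fun z => g z = g z0) ≠ 0 := by
    intro h0
    have : z0 ∈ T.filter (fun z => g z = g z0) := Multiset.mem_filter.mpr ⟨hz0, rfl⟩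
    rw [h0] at this
    exact absurd this (Multiset.notMem_zero z0)
  rcases hmin _ hle (hzero _ (hg z0 hz0)) with h | h
  · exact absurd h hne
  · exact fun z hz => (Multiset.filter_eq_self.mp h) z hz

lemma descend (T : Multiset ℂ) (u : ℂ) {k0 : ℕ} (hk0 : 0 < k0) (huk : u ^ k0 = 1)
    (hsum : T.sum = 0) (hmin : ∀ S ≤ T, S.sum = 0 → S = 0 ∨ S = T)
    (hcard : Multiset.card T = 5) (m : ℕ)
    (hroots' : ∀ z ∈ T, (u⁻¹ * z) ^ m = 1)
    (IH5 : ∀ T' : Multiset ℂ, (∀ z ∈ T', z ^ m = 1) → T'.sum = 0 →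
      (∀ S ≤ T', S.sum = 0 → S = 0 ∨ S = T') → Multiset.card T' = 5 →
      ∃ α ξ : ℂ, (∃ k : ℕ, 0 < k ∧ α ^ k = 1) ∧ ξ ^ 5 = 1 ∧ ξ ≠ 1 ∧
        T' = {α, α * ξ, α * ξ ^ 2, α * ξ ^ 3, α * ξ ^ 4}) :
    ∃ α ξ : ℂ, (∃ k : ℕ, 0 < k ∧ α ^ k = 1) ∧ ξ ^ 5 = 1 ∧ ξ ≠ 1 ∧
      T = {α, α * ξ, α * ξ ^ 2, α * ξ ^ 3, α * ξ ^ 4} := by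
  have hu0 : u ≠ 0 := ru_ne_zero hk0 huk
  set T' := T.map (u⁻¹ * ·) with hT'
  have hback : T'.map (u * ·) = T := by
    rw [hT', Multiset.map_map]
    have : ((u * ·) ∘ (u⁻¹ * ·)) = id := funext fun x => by
      simp only [Function.comp_apply, id_eq]; field_simp
    rw [this, Multiset.map_id]
  have hsum' : T'.sum = 0 := by rw [hT', sum_map_mul, hsum, mul_zero]
  have hmin' : ∀ S ≤ T', S.sum = 0 → S = 0 ∨ S = T' := by
    intro S hS hS0
    have hS2 : S.map (u * ·) ≤ T := by
      rw [← hback]; exact Multiset.map_le_map hS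
    have hS2sum : (S.map (u * ·)).sum = 0 := by rw [sum_map_mul, hS0, mul_zero]
    have hid : (S.map (u * ·)).map (u⁻¹ * ·) = S := by
      rw [Multiset.map_map]
      have : ((u⁻¹ * ·) ∘ (u * ·)) = id := funext fun x => by
        simp only [Function.comp_apply, id_eq]; field_simp
      rw [this, Multiset.map_id]
    rcases hmin _ hS2 hS2sum with h | h
    · left; rw [← hid, h]; rfl
    · right; rw [← hid, h, hT']
  have hcard' : Multiset.card T' = 5 := by rw [hT', Multiset.card_map, hcard]
  have hroots'' : ∀ z ∈ T', z ^ m = 1 := by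
    intro z hz
    obtain ⟨w, hw, rfl⟩ := Multiset.mem_map.mp hz
    exact hroots' w hw
  obtain ⟨α, ξ, ⟨k1, hk1, hαk⟩, hξ5, hξ1, hTeq⟩ := IH5 T' hroots'' hsum' hmin' hcard'
  obtain ⟨mm, hmm, hmmeq⟩ := ru_mul hk0 hk1 huk hαk
  refine ⟨u * α, ξ, ⟨mm, hmm, hmmeq⟩, hξ5, hξ1, ?_⟩
  rw [← hback, hTeq]
  simp only [Multiset.insert_eq_cons, Multiset.map_cons, Multiset.map_singleton, ← mul_assoc]

lemma caseA (n p : ℕ) (hn : 0 < n) (hp : p.Prime) (hpp : p * p ∣ n)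
    (T : Multiset ℂ) (hroots : ∀ z ∈ T, z ^ n = 1) (hsum : T.sum = 0)
    (hmin : ∀ S ≤ T, S.sum = 0 → S = 0 ∨ S = T) (hcard : Multiset.card T = 5)
    (IH5 : ∀ T' : Multiset ℂ, (∀ z ∈ T', z ^ (n / p) = 1) → T'.sum = 0 →
      (∀ S ≤ T', S.sum = 0 → S = 0 ∨ S = T') → Multiset.card T' = 5 →
      ∃ α ξ : ℂ, (∃ k : ℕ, 0 < k ∧ α ^ k = 1) ∧ ξ ^ 5 = 1 ∧ ξ ≠ 1 ∧
        T' = {α, α * ξ, α * ξ ^ 2, α * ξ ^ 3, α * ξ ^ 4}) :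
    ∃ α ξ : ℂ, (∃ k : ℕ, 0 < k ∧ α ^ k = 1) ∧ ξ ^ 5 = 1 ∧ ξ ≠ 1 ∧
      T = {α, α * ξ, α * ξ ^ 2, α * ξ ^ 3, α * ξ ^ 4} := by
  classical
  have hpdvd : p ∣ n := dvd_trans (dvd_mul_right p p) hpp
  set m := n / p with hmdef
  have hpm : n = p * m := (Nat.mul_div_cancel' hpdvd).symm
  have hm0 : 0 < m := Nat.div_pos (Nat.le_of_dvd hn hpdvd) hp.pos
  have hpm2 : p ∣ m := by
    rcases hpp with ⟨c, hc⟩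
    refine ⟨c, ?_⟩
    have : p * m = p * (p * c) := by rw [← hpm, hc]; ring
    exact Nat.eq_of_mul_eq_mul_left hp.pos this
  haveI : NeZero n := ⟨hn.ne'⟩
  set ζ := Complex.exp (2 * Real.pi * Complex.I / n) with hζdef
  have hζ : IsPrimitiveRoot ζ n := Complex.isPrimitiveRoot_exp n hn.ne'
  have hζ0 : ζ ≠ 0 := ru_ne_zero hn hζ.pow_eq_one
  have hex : ∀ z ∈ T, ∃ a, a < n ∧ ζ ^ a = z := by
    intro z hz
    obtain ⟨i, hi, he⟩ := hζ.eq_pow_of_pow_eq_one (hroots z hz)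
    exact ⟨i, hi, he⟩
  set A : ℂ → ℕ := fun z => if h : ∃ a, a < n ∧ ζ ^ a = z then h.choose else 0 with hA
  have hAz : ∀ z ∈ T, ζ ^ (A z) = z := by
    intro z hz
    have h := hex z hz
    simp only [hA, dif_pos h]
    exact h.choose_spec.2
  set g : ℂ → ℕ := fun z => A z % p with hg
  have hgp : ∀ z ∈ T, g z < p := fun z _ => Nat.mod_lt _ hp.pos
  set S : ℕ → Multiset ℂ := fun j => T.filter (fun z => g z = j) with hS
  set c : ℕ → ℂ := fun j => (ζ ^ j)⁻¹ * (S j).sum with hc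
  have key : ∀ z ∈ T, (ζ ^ (g z))⁻¹ * z = (ζ ^ p) ^ (A z / p) := by
    intro z hz
    have h1 : ζ ^ (A z) = z := hAz z hz
    have hz2 : ζ ^ (A z % p) ≠ 0 := pow_ne_zero _ hζ0
    show (ζ ^ (A z % p))⁻¹ * z = (ζ ^ p) ^ (A z / p)
    rw [inv_mul_eq_div, div_eq_iff hz2]
    conv_lhs => rw [← h1]
    rw [← pow_mul, ← pow_add]
    congr 1
    exact (Nat.div_add_mod _ _).symm
  have hfm : ∀ z ∈ T, ((ζ ^ (g z))⁻¹ * z) ^ m = 1 := by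
    intro z hz
    rw [key z hz, ← pow_mul, ← pow_mul]
    have he : p * (A z / p * m) = n * (A z / p) := by rw [hpm]; ring
    rw [he, pow_mul, hζ.pow_eq_one, one_pow]
  have hmem : ∀ j, c j ∈ ℚ⟮(ζ ^ p : ℂ)⟯ := by
    intro j
    show (ζ ^ j)⁻¹ * (S j).sum ∈ ℚ⟮(ζ ^ p : ℂ)⟯
    have h1 : (ζ ^ j)⁻¹ * (S j).sum = ((S j).map (fun z => (ζ ^ j)⁻¹ * z)).sum :=
      (sum_map_mul _ _).symm
    rw [h1]
    apply IntermediateField.multiset_sum_mem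
    intro y hy
    obtain ⟨z, hz, rfl⟩ := Multiset.mem_map.mp hy
    obtain ⟨hzT, hgz⟩ := Multiset.mem_filter.mp hz
    rw [← hgz, key z hzT]
    exact pow_mem (IntermediateField.mem_adjoin_simple_self ℚ (ζ ^ p)) _
  have hdegm : (minpoly ℚ⟮(ζ ^ p : ℂ)⟯ ζ).natDegree = p := by
    have hint : IsIntegral ℚ ζ :=
      ⟨X ^ n - C 1, monic_X_pow_sub_C _ hn.ne', by simp [hζ.pow_eq_one]⟩
    have had := adjoin_deg (ζ := ζ) (ξ := ζ) (b := ζ ^ p) hint ⟨1, (pow_one ζ).symm⟩ ⟨p, rfl⟩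
      (IntermediateField.subset_adjoin ℚ _ (by simp))
    rw [finrank_adjoin_prim hn hζ] at had
    have hprim' : IsPrimitiveRoot (ζ ^ p) m := hζ.pow hn hpm
    rw [finrank_adjoin_prim hm0 hprim'] at had
    have htot : Nat.totient n = p * Nat.totient m := by
      rw [hpm]; exact Nat.totient_mul_of_prime_of_dvd hp hpm2
    rw [htot] at had
    exact Nat.eq_of_mul_eq_mul_right (Nat.totient_pos.mpr hm0) had
  have hrel := fiber_rel T g p hgp ζ hζ0 hsum
  have hczero : ∀ j < p, c j = 0 := by
    have h := coeffs_eq_zero ℚ⟮(ζ ^ p : ℂ)⟯ ζ p (le_of_eq hdegm.symm)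
      (fun j => ⟨c j, hmem j⟩) (by exact hrel)
    intro j hj
    exact congrArg Subtype.val (h j hj)
  have hSzero : ∀ j < p, (S j).sum = 0 := by
    intro j hj
    have h1 : (S j).sum = ζ ^ j * c j := by
      show (S j).sum = ζ ^ j * ((ζ ^ j)⁻¹ * (S j).sum)
      field_simp
    rw [h1, hczero j hj, mul_zero]
  have hT0 : T ≠ 0 := by
    intro h0; rw [h0] at hcard; simp at hcard
  obtain ⟨j0, hj0p, hj0⟩ := single_fiber T g p hgp hSzero hmin hT0
  have hu : (ζ ^ j0) ^ n = 1 := by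
    rw [← pow_mul, mul_comm, pow_mul, hζ.pow_eq_one, one_pow]
  apply descend T (ζ ^ j0) hn hu hsum hmin hcard m _ IH5
  intro z hz
  have := hfm z hz
  rwa [hj0 z hz] at this

lemma caseB (n p : ℕ) (hn : 0 < n) (hp : p.Prime) (hp2 : p ≠ 2) (hpd : p ∣ n)
    (hnsq : ¬ p * p ∣ n)
    (T : Multiset ℂ) (hroots : ∀ z ∈ T, z ^ n = 1) (hsum : T.sum = 0)
    (hmin : ∀ S ≤ T, S.sum = 0 → S = 0 ∨ S = T) (hcard : Multiset.card T = 5)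
    (IH5 : ∀ T' : Multiset ℂ, (∀ z ∈ T', z ^ (n / p) = 1) → T'.sum = 0 →
      (∀ S ≤ T', S.sum = 0 → S = 0 ∨ S = T') → Multiset.card T' = 5 →
      ∃ α ξ : ℂ, (∃ k : ℕ, 0 < k ∧ α ^ k = 1) ∧ ξ ^ 5 = 1 ∧ ξ ≠ 1 ∧
        T' = {α, α * ξ, α * ξ ^ 2, α * ξ ^ 3, α * ξ ^ 4}) :
    ∃ α ξ : ℂ, (∃ k : ℕ, 0 < k ∧ α ^ k = 1) ∧ ξ ^ 5 = 1 ∧ ξ ≠ 1 ∧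
      T = {α, α * ξ, α * ξ ^ 2, α * ξ ^ 3, α * ξ ^ 4} := by
  classical
  set m := n / p with hmdef
  have hpm : n = p * m := (Nat.mul_div_cancel' hpd).symm
  have hm0 : 0 < m := Nat.div_pos (Nat.le_of_dvd hn hpd) hp.pos
  have hpm2 : ¬ p ∣ m := by
    rintro ⟨c, hc⟩
    exact hnsq ⟨c, by rw [hpm, hc]; ring⟩
  have hcop : Nat.Coprime p m := (Nat.Prime.coprime_iff_not_dvd hp).mpr hpm2
  haveI : NeZero n := ⟨hn.ne'⟩
  haveI : NeZero m := ⟨hm0.ne'⟩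
  haveI : NeZero p := ⟨hp.pos.ne'⟩
  set ζ := Complex.exp (2 * Real.pi * Complex.I / n) with hζdef
  have hζ : IsPrimitiveRoot ζ n := Complex.isPrimitiveRoot_exp n hn.ne'
  have hζ0 : ζ ≠ 0 := ru_ne_zero hn hζ.pow_eq_one
  set ξ : ℂ := ζ ^ m with hξdef
  have hξp : IsPrimitiveRoot ξ p := hζ.pow hn (by rw [hpm]; ring)
  have hξ1 : ξ ≠ 1 := by
    intro h
    have h2 := hξp.eq_orderOf
    rw [h, orderOf_one] at h2
    exact absurd h2 hp.one_lt.ne'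
  have hξ0 : ξ ≠ 0 := pow_ne_zero _ hζ0
  set τ : ℂ := ξ ^ m with hτdef
  have hτp : IsPrimitiveRoot τ p := hξp.pow_of_coprime m hcop.symm
  have hζpprim : IsPrimitiveRoot (ζ ^ p) m := hζ.pow hn hpm
  have hex : ∀ z ∈ T, ∃ j, j < p ∧ τ ^ j = z ^ m := by
    intro z hz
    have h1 : (z ^ m) ^ p = 1 := by
      rw [← pow_mul, mul_comm, ← hpm]
      exact hroots z hz
    obtain ⟨i, hi, he⟩ := hτp.eq_pow_of_pow_eq_one h1
    exact ⟨i, hi, he⟩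
  set g : ℂ → ℕ := fun z => if h : ∃ j, j < p ∧ τ ^ j = z ^ m then h.choose else 0 with hgdef
  have hgz : ∀ z ∈ T, τ ^ (g z) = z ^ m ∧ g z < p := by
    intro z hz
    have h := hex z hz
    simp only [hgdef, dif_pos h]
    exact ⟨h.choose_spec.2, h.choose_spec.1⟩
  have hgp : ∀ z ∈ T, g z < p := fun z hz => (hgz z hz).2
  set S : ℕ → Multiset ℂ := fun j => T.filter (fun z => g z = j) with hSdef
  set c : ℕ → ℂ := fun j => (ξ ^ j)⁻¹ * (S j).sum with hcdef
  have hSle : ∀ j, S j ≤ T := fun j => Multiset.filter_le _ T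
  have hw : ∀ j, ∀ z ∈ S j, ((ξ ^ j)⁻¹ * z) ^ m = 1 := by
    intro j z hz
    obtain ⟨hzT, hgj⟩ := Multiset.mem_filter.mp hz
    have h1 : τ ^ (g z) = z ^ m := (hgz z hzT).1
    have hz0 : z ≠ 0 := ru_ne_zero hn (hroots z hzT)
    rw [← hgj, mul_pow, inv_pow, ← pow_mul, mul_comm (g z) m, pow_mul, ← hτdef, h1]
    exact inv_mul_cancel₀ (pow_ne_zero _ hz0)
  have hmem : ∀ j, c j ∈ ℚ⟮(ζ ^ p : ℂ)⟯ := by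
    intro j
    show (ξ ^ j)⁻¹ * (S j).sum ∈ ℚ⟮(ζ ^ p : ℂ)⟯
    have h1 : (ξ ^ j)⁻¹ * (S j).sum = ((S j).map (fun z => (ξ ^ j)⁻¹ * z)).sum :=
      (sum_map_mul _ _).symm
    rw [h1]
    apply IntermediateField.multiset_sum_mem
    intro y hy
    obtain ⟨z, hz, rfl⟩ := Multiset.mem_map.mp hy
    obtain ⟨i, hi, he⟩ := hζpprim.eq_pow_of_pow_eq_one (hw j z hz)
    rw [← he]
    exact pow_mem (IntermediateField.mem_adjoin_simple_self ℚ (ζ ^ p)) _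
  have hdegm : (minpoly ℚ⟮(ζ ^ p : ℂ)⟯ ξ).natDegree = p - 1 := by
    have hint : IsIntegral ℚ ζ :=
      ⟨X ^ n - C 1, monic_X_pow_sub_C _ hn.ne', by simp [hζ.pow_eq_one]⟩
    have hbez : (1 : ℤ) = p * Nat.gcdA p m + m * Nat.gcdB p m := by
      have h1 := Nat.gcd_eq_gcd_ab p m
      rw [Nat.Coprime.gcd_eq_one hcop] at h1
      exact_mod_cast h1
    have hgen : ζ ∈ IntermediateField.adjoin ℚ ({ζ ^ p, ξ} : Set ℂ) := by
      have hx : (ζ ^ p : ℂ) ∈ IntermediateField.adjoin ℚ ({ζ ^ p, ξ} : Set ℂ) :=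
        IntermediateField.subset_adjoin ℚ _ (by left; rfl)
      have hy : ξ ∈ IntermediateField.adjoin ℚ ({ζ ^ p, ξ} : Set ℂ) :=
        IntermediateField.subset_adjoin ℚ _ (by right; rfl)
      have hzeq : (ζ ^ p) ^ (Nat.gcdA p m) * ξ ^ (Nat.gcdB p m) = ζ := by
        rw [hξdef, ← zpow_natCast ζ p, ← zpow_natCast ζ m, ← zpow_mul, ← zpow_mul,
          ← zpow_add₀ hζ0, ← hbez, zpow_one]
      have hmm := mul_mem (zpow_mem hx (Nat.gcdA p m)) (zpow_mem hy (Nat.gcdB p m))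
      rwa [hzeq] at hmm
    have had := adjoin_deg (ζ := ζ) (ξ := ξ) (b := ζ ^ p) hint ⟨m, hξdef⟩ ⟨p, rfl⟩ hgen
    rw [finrank_adjoin_prim hn hζ, finrank_adjoin_prim hm0 hζpprim] at had
    have htot : Nat.totient n = (p - 1) * Nat.totient m := by
      rw [hpm, Nat.totient_mul hcop, Nat.totient_prime hp]
    rw [htot] at had
    exact Nat.eq_of_mul_eq_mul_right (Nat.totient_pos.mpr hm0) had
  have hrel := fiber_rel T g p hgp ξ hξ0 hsum
  have hgeom : ∑ j ∈ Finset.range p, ξ ^ j = 0 := by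
    rw [geom_sum_eq hξ1 p, hξp.pow_eq_one]
    simp
  obtain ⟨q, rfl⟩ : ∃ q, p = q + 1 := ⟨p - 1, by have := hp.pos; omega⟩
  have hconst : ∀ j < q + 1, c j = c q := by
    have hrel2 : ∑ j ∈ Finset.range (q + 1), (c j - c q) * ξ ^ j = 0 := by
      have e1 : ∑ j ∈ Finset.range (q + 1), (c j - c q) * ξ ^ j
          = (∑ j ∈ Finset.range (q + 1), c j * ξ ^ j)
            - c q * (∑ j ∈ Finset.range (q + 1), ξ ^ j) := by
        rw [Finset.mul_sum, ← Finset.sum_sub_distrib]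
        exact Finset.sum_congr rfl fun j _ => by ring
      rw [e1, hgeom, mul_zero, sub_zero, ← hrel]
    have hrel3 : ∑ j ∈ Finset.range q, (c j - c q) * ξ ^ j = 0 := by
      have e2 := Finset.sum_range_succ (fun j => (c j - c q) * ξ ^ j) q
      rw [hrel2] at e2
      simp only [sub_self, zero_mul, add_zero] at e2
      exact e2.symm
    have hdeg' : q ≤ (minpoly ℚ⟮(ζ ^ (q + 1) : ℂ)⟯ ξ).natDegree := by
      rw [hdegm]; omega
    have hco := coeffs_eq_zero ℚ⟮(ζ ^ (q + 1) : ℂ)⟯ ξ q hdeg'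
      (fun j => ⟨c j - c q, sub_mem (hmem j) (hmem q)⟩) (by exact hrel3)
    intro j hj
    rcases Nat.lt_succ_iff_lt_or_eq.mp hj with h | h
    · have := congrArg Subtype.val (hco j h)
      simpa [sub_eq_zero] using this
    · rw [h]
  have hSsum : ∀ j, (S j).sum = ξ ^ j * c j := by
    intro j
    show (S j).sum = ξ ^ j * ((ξ ^ j)⁻¹ * (S j).sum)
    field_simp
  by_cases hCC : c q = 0
  · -- all fiber sums vanish: single fiber, descend
    have hSzero : ∀ j < q + 1, (S j).sum = 0 := by
      intro j hj
      rw [hSsum j, hconst j hj, hCC, mul_zero]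
    have hT0 : T ≠ 0 := by intro h0; rw [h0] at hcard; simp at hcard
    obtain ⟨j0, hj0p, hj0⟩ := single_fiber T g (q + 1) hgp hSzero hmin hT0
    have hu : (ξ ^ j0) ^ (q + 1) = 1 := by
      rw [← pow_mul, mul_comm, pow_mul, hξp.pow_eq_one, one_pow]
    apply descend T (ξ ^ j0) (Nat.succ_pos q) hu hsum hmin hcard m _ IH5
    intro z hz
    have : z ∈ S j0 := Multiset.mem_filter.mpr ⟨hz, hj0 z hz⟩
    exact hw j0 z this
  · -- all fibers nonempty
    have hSne : ∀ j < q + 1, S j ≠ 0 := by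
      intro j hj h0
      have h1 : (S j).sum = 0 := by rw [h0]; rfl
      rw [hSsum j, hconst j hj] at h1
      exact hCC (by
        rcases mul_eq_zero.mp h1 with h | h
        · exact absurd h (pow_ne_zero _ hξ0)
        · exact h)
    have hk1 : ∀ j < q + 1, 1 ≤ Multiset.card (S j) := by
      intro j hj
      exact Multiset.card_pos.mpr (hSne j hj)
    have hsumk : ∑ j ∈ Finset.range (q + 1), Multiset.card (S j) = 5 := by
      rw [card_of_partition T g (q + 1) hgp, hcard]
    have hple : q + 1 ≤ 5 := by
      have h1 : ∑ j ∈ Finset.range (q + 1), 1 ≤ ∑ j ∈ Finset.range (q + 1), Multiset.card (S j) :=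
        Finset.sum_le_sum (fun j hj => hk1 j (Finset.mem_range.mp hj))
      simpa [hsumk] using h1
    have hqle : q ≤ 4 := by omega
    have hq24 : q = 2 ∨ q = 4 := by
      interval_cases q
      · exact absurd hp (by decide)
      · exact absurd rfl hp2
      · left; rfl
      · exact absurd hp (by decide)
      · right; rfl
    rcases hq24 with rfl | rfl
    · -- q = 2, p = 3 : impossible
      exfalso
      have hexp : Multiset.card (S 0) + Multiset.card (S 1) + Multiset.card (S 2) = 5 := by
        have h := hsumk
        rw [Finset.sum_range_succ, Finset.sum_range_succ, Finset.sum_range_succ,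
          Finset.sum_range_zero] at h
        omega
      have hb0 : 1 ≤ Multiset.card (S 0) := hk1 0 (by omega)
      have hb1 : 1 ≤ Multiset.card (S 1) := hk1 1 (by omega)
      have hb2 : 1 ≤ Multiset.card (S 2) := hk1 2 (by omega)
      have hsingleton : ∀ j1 < 3, Multiset.card (S j1) = 1 → (c 2) ^ m = 1 := by
        intro j1 hj1 hk
        obtain ⟨y, hy⟩ := Multiset.card_eq_one.mp hk
        have hymem : y ∈ S j1 := by rw [hy]; exact Multiset.mem_singleton_self y
        have h1 := hw j1 y hymem
        have h2 : c j1 = (ξ ^ j1)⁻¹ * y := by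
          show (ξ ^ j1)⁻¹ * (S j1).sum = _
          rw [hy, Multiset.sum_singleton]
        have h3 : c 2 = (ξ ^ j1)⁻¹ * y := by rw [← h2]; exact (hconst j1 hj1).symm
        rw [h3]; exact h1
      have hCCm : (c 2) ^ m = 1 := by
        have hdisj : Multiset.card (S 0) = 1 ∨ Multiset.card (S 1) = 1
            ∨ Multiset.card (S 2) = 1 := by omega
        rcases hdisj with h | h | h
        · exact hsingleton 0 (by omega) h
        · exact hsingleton 1 (by omega) h
        · exact hsingleton 2 (by omega) h
      have hCCunit := ru_unit hm0 hCCm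
      have hnegunit : (-(c 2)) * (starRingEnd ℂ) (-(c 2)) = 1 := by
        rw [map_neg, neg_mul_neg]; exact hCCunit
      have hkill2 : ∀ j2 < 3, Multiset.card (S j2) = 2 → False := by
        intro j2 hj2 hk
        obtain ⟨x1, x2, hx⟩ := Multiset.card_eq_two.mp hk
        have hx1 : x1 ∈ S j2 := by rw [hx]; simp
        have hx2 : x2 ∈ S j2 := by rw [hx]; simp
        have hw1 := hw j2 x1 hx1
        have hw2 := hw j2 x2 hx2
        have hsum12 : (ξ ^ j2)⁻¹ * x1 + (ξ ^ j2)⁻¹ * x2 = c 2 := by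
          have h2 : c j2 = (ξ ^ j2)⁻¹ * (x1 + x2) := by
            show (ξ ^ j2)⁻¹ * (S j2).sum = _
            rw [hx]
            simp [Multiset.sum_cons, Multiset.sum_singleton]
          have h3 := hconst j2 hj2
          rw [h2] at h3
          linear_combination h3
        have h3u := three_units (ru_unit hm0 hw1) (ru_unit hm0 hw2) hnegunit
          (by linear_combination hsum12)
        have hw20 : (ξ ^ j2)⁻¹ * x2 ≠ 0 := ru_ne_zero hm0 hw2
        set w1 := (ξ ^ j2)⁻¹ * x1 with hw1def
        set w2 := (ξ ^ j2)⁻¹ * x2 with hw2def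
        have hω : (w1 * w2⁻¹) ^ 2 + (w1 * w2⁻¹) + 1 = 0 := by
          have e1 : (w1 * w2⁻¹) ^ 2 + (w1 * w2⁻¹) + 1
              = (w1 ^ 2 + w1 * w2 + w2 ^ 2) * (w2⁻¹) ^ 2 := by
            field_simp
          rw [e1, h3u, zero_mul]
        have hω3 : (w1 * w2⁻¹) ^ 3 = 1 := by linear_combination (w1 * w2⁻¹ - 1) * hω
        have hω1 : w1 * w2⁻¹ ≠ 1 := by
          intro h
          rw [h] at hω
          norm_num at hω
        have hωm : (w1 * w2⁻¹) ^ m = 1 := by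
          rw [mul_pow, inv_pow, hw1, hw2]
          norm_num
        have hd1 : orderOf (w1 * w2⁻¹) ∣ Nat.gcd 3 m :=
          Nat.dvd_gcd (orderOf_dvd_of_pow_eq_one hω3) (orderOf_dvd_of_pow_eq_one hωm)
        have hd2 : Nat.gcd 3 m = 1 := hcop
        rw [hd2] at hd1
        exact hω1 (orderOf_eq_one_iff.mp (Nat.dvd_one.mp hd1))
      have hkill3 : ∀ j3 < 3, Multiset.card (S j3) = 3 → False := by
        intro j3 hj3 hk
        obtain ⟨x1, x2, x3, hx⟩ := Multiset.card_eq_three.mp hk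
        have hx1 : x1 ∈ S j3 := by rw [hx]; simp
        have hx2 : x2 ∈ S j3 := by rw [hx]; simp
        have hx3 : x3 ∈ S j3 := by rw [hx]; simp
        have hw1 := hw j3 x1 hx1
        have hw2 := hw j3 x2 hx2
        have hw3 := hw j3 x3 hx3
        have hsum123 : (ξ ^ j3)⁻¹ * x1 + (ξ ^ j3)⁻¹ * x2 + (ξ ^ j3)⁻¹ * x3 = c 2 := by
          have h2 : c j3 = (ξ ^ j3)⁻¹ * (x1 + x2 + x3) := by
            show (ξ ^ j3)⁻¹ * (S j3).sum = _
            rw [hx]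
            simp only [Multiset.insert_eq_cons, Multiset.sum_cons, Multiset.sum_singleton]
            ring
          have h3 := hconst j3 hj3
          rw [h2] at h3
          linear_combination h3
        have h4 := four_units (ru_unit hm0 hw1) (ru_unit hm0 hw2) (ru_unit hm0 hw3) hnegunit
          (by linear_combination hsum123)
        have hξj0 : ((ξ : ℂ) ^ j3)⁻¹ ≠ 0 := inv_ne_zero (pow_ne_zero _ hξ0)
        have hpair : ∃ P : Multiset ℂ, P ≤ S j3 ∧ P.sum = 0 ∧ Multiset.card P = 2 := by
          rcases h4 with h | h | h
          · refine ⟨{x1, x2}, ?_, ?_, by simp⟩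
            · rw [hx]
              exact Multiset.cons_le_cons _ (Multiset.cons_le_cons _ (Multiset.zero_le _))
            · have h0 : (ξ ^ j3)⁻¹ * (x1 + x2) = 0 := by
                rw [mul_add]; linear_combination h
              have h1 : x1 + x2 = 0 := by
                rcases mul_eq_zero.mp h0 with h' | h'
                · exact absurd h' hξj0
                · exact h'
              simpa using h1
          · refine ⟨{x1, x3}, ?_, ?_, by simp⟩
            · rw [hx]
              exact Multiset.cons_le_cons _ (Multiset.le_cons_self _ _)
            · have h0 : (ξ ^ j3)⁻¹ * (x1 + x3) = 0 := by
                rw [mul_add]; linear_combination h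
              have h1 : x1 + x3 = 0 := by
                rcases mul_eq_zero.mp h0 with h' | h'
                · exact absurd h' hξj0
                · exact h'
              simpa using h1
          · refine ⟨{x2, x3}, ?_, ?_, by simp⟩
            · rw [hx]
              exact Multiset.le_cons_self _ _
            · have h0 : (ξ ^ j3)⁻¹ * (x2 + x3) = 0 := by
                rw [mul_add]; linear_combination hsum123 - h
              have h1 : x2 + x3 = 0 := by
                rcases mul_eq_zero.mp h0 with h' | h'
                · exact absurd h' hξj0
                · exact h'
              simpa using h1
        obtain ⟨P, hPle, hPsum, hPcard⟩ := hpair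
        have hPT : P ≤ T := le_trans hPle (hSle j3)
        rcases hmin P hPT hPsum with h | h
        · rw [h] at hPcard; simp at hPcard
        · rw [h, hcard] at hPcard; omega
      have hbig : (Multiset.card (S 0) = 2 ∨ Multiset.card (S 1) = 2 ∨ Multiset.card (S 2) = 2)
          ∨ (Multiset.card (S 0) = 3 ∨ Multiset.card (S 1) = 3
            ∨ Multiset.card (S 2) = 3) := by omega
      rcases hbig with (h | h | h) | (h | h | h)
      exacts [hkill2 0 (by omega) h, hkill2 1 (by omega) h, hkill2 2 (by omega) h,
        hkill3 0 (by omega) h, hkill3 1 (by omega) h, hkill3 2 (by omega) h]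
    · -- q = 4, p = 5 : T is a rotated copy of the 5th roots of unity
      have hexp : Multiset.card (S 0) + Multiset.card (S 1) + Multiset.card (S 2)
          + Multiset.card (S 3) + Multiset.card (S 4) = 5 := by
        have h := hsumk
        rw [Finset.sum_range_succ, Finset.sum_range_succ, Finset.sum_range_succ,
          Finset.sum_range_succ, Finset.sum_range_succ, Finset.sum_range_zero] at h
        omega
      have hb0 : 1 ≤ Multiset.card (S 0) := hk1 0 (by omega)
      have hb1 : 1 ≤ Multiset.card (S 1) := hk1 1 (by omega)
      have hb2 : 1 ≤ Multiset.card (S 2) := hk1 2 (by omega)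
      have hb3 : 1 ≤ Multiset.card (S 3) := hk1 3 (by omega)
      have hb4 : 1 ≤ Multiset.card (S 4) := hk1 4 (by omega)
      have hone : ∀ j < 5, Multiset.card (S j) = 1 := by
        intro j hj
        interval_cases j <;> omega
      have hyj : ∀ j < 5, S j = {c 4 * ξ ^ j} := by
        intro j hj
        obtain ⟨y, hy⟩ := Multiset.card_eq_one.mp (hone j hj)
        rw [hy]
        congr 1
        have h2 : c j = (ξ ^ j)⁻¹ * y := by
          show (ξ ^ j)⁻¹ * (S j).sum = _
          rw [hy, Multiset.sum_singleton]
        have h3 : (ξ ^ j)⁻¹ * y = c 4 := by rw [← h2]; exact hconst j (by omega)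
        have h5 : ξ ^ j * ((ξ ^ j)⁻¹ * y) = ξ ^ j * c 4 := by rw [h3]
        rw [← mul_assoc, mul_inv_cancel₀ (pow_ne_zero _ hξ0), one_mul] at h5
        rw [h5]; ring
      have hT : T = {c 4, c 4 * ξ, c 4 * ξ ^ 2, c 4 * ξ ^ 3, c 4 * ξ ^ 4} := by
        have hpart := multiset_partition T g 5 hgp
        rw [← hpart, Finset.sum_range_succ, Finset.sum_range_succ, Finset.sum_range_succ,
          Finset.sum_range_succ, Finset.sum_range_succ, Finset.sum_range_zero]
        have e0 := hyj 0 (by omega)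
        have e1 := hyj 1 (by omega)
        have e2 := hyj 2 (by omega)
        have e3 := hyj 3 (by omega)
        have e4 := hyj 4 (by omega)
        rw [show (Multiset.filter (fun z => g z = 0) T) = S 0 from rfl,
          show (Multiset.filter (fun z => g z = 1) T) = S 1 from rfl,
          show (Multiset.filter (fun z => g z = 2) T) = S 2 from rfl,
          show (Multiset.filter (fun z => g z = 3) T) = S 3 from rfl,
          show (Multiset.filter (fun z => g z = 4) T) = S 4 from rfl,
          e0, e1, e2, e3, e4]
        simp [Multiset.singleton_add, Multiset.cons_add, pow_zero, pow_one, mul_one]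
      refine ⟨c 4, ξ, ?_, by simpa using hξp.pow_eq_one, hξ1, hT⟩
      have hmemT : c 4 * ξ ^ 0 ∈ T := by
        apply Multiset.mem_of_le (hSle 0)
        rw [hyj 0 (by omega)]
        simp
      refine ⟨n, hn, ?_⟩
      have h6 := hroots _ hmemT
      simpa using h6


lemma rev5 (a b c d e : ℂ) : ({a, b, c, d, e} : Multiset ℂ) = {e, d, c, b, a} := by
  show (↑[a, b, c, d, e] : Multiset ℂ) = ↑[e, d, c, b, a]
  exact (Multiset.coe_reverse [a, b, c, d, e]).symm

lemma rev3 (a b c : ℂ) : ({a, b, c} : Multiset ℂ) = {c, b, a} := by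
  show (↑[a, b, c] : Multiset ℂ) = ↑[c, b, a]
  exact (Multiset.coe_reverse [a, b, c]).symm

lemma W5 : ∀ n : ℕ, 0 < n → ∀ T : Multiset ℂ,
    (∀ z ∈ T, z ^ n = 1) → T.sum = 0 →
    (∀ S ≤ T, S.sum = 0 → S = 0 ∨ S = T) → Multiset.card T = 5 →
    ∃ α ξ : ℂ, (∃ k : ℕ, 0 < k ∧ α ^ k = 1) ∧ ξ ^ 5 = 1 ∧ ξ ≠ 1 ∧
      T = {α, α * ξ, α * ξ ^ 2, α * ξ ^ 3, α * ξ ^ 4} := by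
  intro n
  induction n using Nat.strong_induction_on with
  | _ n IH =>
    intro hn T hroots hsum hmin hcard
    by_cases hA : ∃ p, p.Prime ∧ p * p ∣ n
    · obtain ⟨p, hp, hpp⟩ := hA
      have hpd : p ∣ n := dvd_trans (dvd_mul_right p p) hpp
      have hmlt : n / p < n := Nat.div_lt_self hn hp.one_lt
      have hm0 : 0 < n / p := Nat.div_pos (Nat.le_of_dvd hn hpd) hp.pos
      exact caseA n p hn hp hpp T hroots hsum hmin hcard
        (fun T' h1 h2 h3 h4 => IH (n / p) hmlt hm0 T' h1 h2 h3 h4)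
    · by_cases hB : ∃ p, p.Prime ∧ p ≠ 2 ∧ p ∣ n
      · obtain ⟨p, hp, hp2, hpd⟩ := hB
        push_neg at hA
        have hnsq : ¬ p * p ∣ n := hA p hp
        have hmlt : n / p < n := Nat.div_lt_self hn hp.one_lt
        have hm0 : 0 < n / p := Nat.div_pos (Nat.le_of_dvd hn hpd) hp.pos
        exact caseB n p hn hp hp2 hpd hnsq T hroots hsum hmin hcard
          (fun T' h1 h2 h3 h4 => IH (n / p) hmlt hm0 T' h1 h2 h3 h4)
      · exfalso
        push_neg at hA hB
        have hn2 : n = 1 ∨ n = 2 := by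
          by_contra hcon
          push_neg at hcon
          obtain ⟨hn1, hn2'⟩ := hcon
          have hpf := Nat.minFac_prime (hn1 : n ≠ 1)
          have hpdv := Nat.minFac_dvd n
          have hp2 : n.minFac = 2 := by
            by_contra h
            exact absurd hpdv (hB _ hpf h)
          have h2d : 2 ∣ n := hp2 ▸ hpdv
          obtain ⟨m', hnm⟩ := h2d
          have hm'2 : m' ≠ 1 := by omega
          have hm'0 : m' ≠ 0 := by omega
          have hqf := Nat.minFac_prime hm'2
          have hqd : m'.minFac ∣ n := dvd_trans (Nat.minFac_dvd m') ⟨2, by omega⟩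
          have hq2 : m'.minFac = 2 := by
            by_contra h
            exact absurd hqd (hB _ hqf h)
          have h2m : 2 ∣ m' := hq2 ▸ Nat.minFac_dvd m'
          obtain ⟨t, ht⟩ := h2m
          exact absurd ⟨t, by omega⟩ (hA 2 Nat.prime_two)
        have hpm : ∀ z ∈ T, z = 1 ∨ z = -1 := by
          intro z hz
          have h2 : z ^ 2 = 1 := by
            rcases hn2 with h | h
            · have h3 := hroots z hz
              rw [h, pow_one] at h3
              rw [h3]; norm_num
            · have h3 := hroots z hz
              rwa [h] at h3
          have h3 : (z - 1) * (z + 1) = 0 := by linear_combination h2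
          rcases mul_eq_zero.mp h3 with h | h
          · left; linear_combination h
          · right; linear_combination h
        classical
        set T1 := T.filter (fun z => z = 1) with hT1
        set T2 := T.filter (fun z => ¬ z = 1) with hT2
        have hsplit : T1 + T2 = T := Multiset.filter_add_not _ T
        have h1 : T1 = Multiset.replicate (Multiset.card T1) 1 :=
          Multiset.eq_replicate_card.mpr (fun z hz => (Multiset.mem_filter.mp hz).2)
        have h2 : T2 = Multiset.replicate (Multiset.card T2) (-1) :=
          Multiset.eq_replicate_card.mpr (fun z hz => by
            obtain ⟨hzT, hz1⟩ := Multiset.mem_filter.mp hz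
            rcases hpm z hzT with h | h
            · exact absurd h hz1
            · exact h)
        have hcards : Multiset.card T1 + Multiset.card T2 = 5 := by
          have h := congrArg Multiset.card hsplit
          rw [Multiset.card_add, hcard] at h
          exact h
        have hsum0 : T1.sum + T2.sum = 0 := by
          have h := congrArg Multiset.sum hsplit
          rw [Multiset.sum_add] at h
          rw [h, hsum]
        have hv1 : T1.sum = (Multiset.card T1 : ℂ) := by
          rw [h1, Multiset.sum_replicate]
          simp
        have hv2 : T2.sum = -(Multiset.card T2 : ℂ) := by
          rw [h2, Multiset.sum_replicate]
          simp
        rw [hv1, hv2] at hsum0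
        have heqc : (Multiset.card T1 : ℂ) = (Multiset.card T2 : ℂ) := by
          linear_combination hsum0
        have heq : Multiset.card T1 = Multiset.card T2 := Nat.cast_inj.mp heqc
        omega

lemma card_eq_four {T : Multiset ℂ} (h : Multiset.card T = 4) :
    ∃ a b c d, T = {a, b, c, d} := by
  obtain ⟨a, s, rfl, hs⟩ := card_eq_succ' h
  obtain ⟨b, c, d, rfl⟩ := Multiset.card_eq_three.mp hs
  exact ⟨a, b, c, d, rfl⟩

end SMVS

/-- Every minimal vanishing sum of roots of unity of weight `d` with
`1 ≤ d < 6` has `d` prime, and is a common root-of-unity multiple of the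
full multiset of `d`-th roots of unity. -/
theorem small_minimal_vanishing_sums (T : Multiset ℂ)
    (hroots : ∀ z ∈ T, ∃ m : ℕ, 0 < m ∧ z ^ m = 1)
    (hsum : T.sum = 0)
    (hmin : ∀ S ≤ T, S.sum = 0 → S = 0 ∨ S = T)
    (h1 : 1 ≤ Multiset.card T) (h6 : Multiset.card T < 6) :
    (Multiset.card T).Prime ∧
    ∃ α : ℂ, (∃ m : ℕ, 0 < m ∧ α ^ m = 1) ∧
      T = (Polynomial.nthRoots (Multiset.card T) (1 : ℂ)).map (α * ·) := by
  classical
  have hN : ∃ N : ℕ, 0 < N ∧ ∀ z ∈ T, z ^ N = 1 := by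
    refine ⟨(T.map (fun z => orderOf z)).prod, ?_, ?_⟩
    · apply Multiset.prod_pos
      intro x hx
      obtain ⟨z, hz, rfl⟩ := Multiset.mem_map.mp hx
      obtain ⟨mz, hmz, hz1⟩ := hroots z hz
      exact (isOfFinOrder_iff_pow_eq_one.mpr ⟨mz, hmz, hz1⟩).orderOf_pos
    · intro z hz
      obtain ⟨t, ht⟩ := Multiset.dvd_prod (Multiset.mem_map_of_mem (fun z => orderOf z) hz)
      rw [ht, pow_mul, pow_orderOf_eq_one, one_pow]
  obtain ⟨N, hN0, hNr⟩ := hN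
  have hunit : ∀ z ∈ T, z * (starRingEnd ℂ) z = 1 := fun z hz => ru_unit hN0 (hNr z hz)
  have hd : Multiset.card T = 1 ∨ Multiset.card T = 2 ∨ Multiset.card T = 3
      ∨ Multiset.card T = 4 ∨ Multiset.card T = 5 := by omega
  rcases hd with hc | hc | hc | hc | hc
  · -- weight 1 : impossible
    exfalso
    obtain ⟨a, ha⟩ := Multiset.card_eq_one.mp hc
    have haT : a ∈ T := by rw [ha]; simp
    obtain ⟨ma, hma, ha1⟩ := hroots a haT
    have ha0 : a = 0 := by
      rw [ha] at hsum
      simpa using hsum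
    exact ru_ne_zero hma ha1 ha0
  · -- weight 2
    obtain ⟨a, b, hab⟩ := Multiset.card_eq_two.mp hc
    have haT : a ∈ T := by rw [hab]; simp
    have hs2 : a + b = 0 := by
      rw [hab] at hsum
      simpa [Multiset.insert_eq_cons, Multiset.sum_cons, Multiset.sum_singleton] using hsum
    have hb : b = -a := by linear_combination hs2
    rw [hc]
    refine ⟨by norm_num, a, hroots a haT, ?_⟩
    have hprim : IsPrimitiveRoot (-1 : ℂ) 2 :=
      prim_of_prime Nat.prime_two (by norm_num) (by norm_num)
    rw [nthRoots_eq_of_prim hprim, hab, hb]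
    have hr : (Multiset.range 2) = (1 : ℕ) ::ₘ 0 ::ₘ 0 := by
      simp [Multiset.range_succ]
    rw [hr]
    simp only [Multiset.map_cons, Multiset.map_zero, pow_one, pow_zero, mul_one, mul_neg_one]
    exact Multiset.cons_swap _ _ _
  · -- weight 3
    obtain ⟨a, b, c, habc⟩ := Multiset.card_eq_three.mp hc
    have haT : a ∈ T := by rw [habc]; simp
    have hbT : b ∈ T := by rw [habc]; simp
    have hcT : c ∈ T := by rw [habc]; simp
    have hs3 : a + b + c = 0 := by
      rw [habc] at hsum
      simp only [Multiset.insert_eq_cons, Multiset.sum_cons, Multiset.sum_singleton] at hsum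
      linear_combination hsum
    have ha0 : a ≠ 0 := ru_ne_zero hN0 (hNr a haT)
    have h3u := three_units (hunit a haT) (hunit b hbT) (hunit c hcT) hs3
    set ω := b * a⁻¹ with hωdef
    have hω : ω ^ 2 + ω + 1 = 0 := by
      have e1 : ω ^ 2 + ω + 1 = (a ^ 2 + a * b + b ^ 2) * (a⁻¹) ^ 2 := by
        have ha2 : a * a⁻¹ = 1 := mul_inv_cancel₀ ha0
        field_simp
        linear_combination (b * a + b ^ 2 * (a * a⁻¹ + 1)) * ha2
      rw [e1, h3u, zero_mul]
    have hω3 : ω ^ 3 = 1 := by linear_combination (ω - 1) * hω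
    have hω1 : ω ≠ 1 := by
      intro h
      rw [h] at hω
      norm_num at hω
    have hb' : b = a * ω := by
      rw [hωdef]
      field_simp
    have hc' : c = a * ω ^ 2 := by linear_combination hs3 - hb' - a * hω
    rw [hc]
    refine ⟨by norm_num, a, hroots a haT, ?_⟩
    have hprim : IsPrimitiveRoot ω 3 := prim_of_prime (by norm_num) hω3 hω1
    rw [nthRoots_eq_of_prim hprim, habc, hb', hc']
    have hr : (Multiset.range 3) = (2 : ℕ) ::ₘ 1 ::ₘ 0 ::ₘ 0 := by
      simp [Multiset.range_succ]
    rw [hr]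
    simp only [Multiset.map_cons, Multiset.map_zero, pow_one, pow_zero, mul_one]
    exact rev3 a (a * ω) (a * ω ^ 2)
  · -- weight 4 : impossible
    exfalso
    obtain ⟨a, b, c, d, habcd⟩ := card_eq_four hc
    have haT : a ∈ T := by rw [habcd]; simp
    have hbT : b ∈ T := by rw [habcd]; simp
    have hcT : c ∈ T := by rw [habcd]; simp
    have hdT : d ∈ T := by rw [habcd]; simp
    have hs4 : a + b + c + d = 0 := by
      rw [habcd] at hsum
      simp only [Multiset.insert_eq_cons, Multiset.sum_cons, Multiset.sum_singleton] at hsum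
      linear_combination hsum
    have h4 := four_units (hunit a haT) (hunit b hbT) (hunit c hcT) (hunit d hdT) hs4
    have hpair : ∃ P : Multiset ℂ, P ≤ T ∧ P.sum = 0 ∧ Multiset.card P = 2 := by
      rcases h4 with h | h | h
      · refine ⟨{a, b}, ?_, ?_, by simp⟩
        · rw [habcd]
          exact Multiset.cons_le_cons _ (Multiset.cons_le_cons _ (Multiset.zero_le _))
        · simp only [Multiset.insert_eq_cons, Multiset.sum_cons, Multiset.sum_singleton]
          linear_combination h
      · refine ⟨{a, c}, ?_, ?_, by simp⟩
        · rw [habcd]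
          refine Multiset.cons_le_cons _ ?_
          exact le_trans (Multiset.cons_le_cons _ (Multiset.zero_le _))
            (Multiset.le_cons_self _ _)
        · simp only [Multiset.insert_eq_cons, Multiset.sum_cons, Multiset.sum_singleton]
          linear_combination h
      · refine ⟨{a, d}, ?_, ?_, by simp⟩
        · rw [habcd]
          refine Multiset.cons_le_cons _ ?_
          exact le_trans (le_trans (Multiset.cons_le_cons _ (Multiset.zero_le _))
            (Multiset.le_cons_self _ _)) (Multiset.le_cons_self _ _)
        · simp only [Multiset.insert_eq_cons, Multiset.sum_cons, Multiset.sum_singleton]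
          linear_combination h
    obtain ⟨P, hPle, hPsum, hPcard⟩ := hpair
    rcases hmin P hPle hPsum with h | h
    · rw [h] at hPcard; simp at hPcard
    · rw [h, hc] at hPcard; omega
  · -- weight 5
    obtain ⟨α, ξ, hα, hξ5, hξ1, hTeq⟩ := W5 N hN0 T hNr hsum hmin hc
    rw [hc]
    refine ⟨by norm_num, α, hα, ?_⟩
    have hprim : IsPrimitiveRoot ξ 5 := prim_of_prime (by norm_num) hξ5 hξ1
    rw [nthRoots_eq_of_prim hprim, hTeq]
    have hr : (Multiset.range 5) = (4 : ℕ) ::ₘ 3 ::ₘ 2 ::ₘ 1 ::ₘ 0 ::ₘ 0 := by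
      simp [Multiset.range_succ]
    rw [hr]
    simp only [Multiset.map_cons, Multiset.map_zero, pow_one, pow_zero, mul_one]
    exact rev5 α (α * ξ) (α * ξ ^ 2) (α * ξ ^ 3) (α * ξ ^ 4)
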